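/- Let X = [0,1] with the uniform distribution, and let C be the class of interval classifiers h_{[a,b]} with 0 < a < b < 1, where h_{[a,b]}(x) = +1 iff x ∈ [a,b]. Then for every 0 < a < b < 1, the disagreement coefficient of h_{[a,b]} with respect to C satisfies θ_{h_{[a,b]}} = max{1/(b-a), 4}. -/

import Mathlib

open MeasureTheory ENNReal Set

/-- Region of disagreement of a set of binary classifiers. -/
def DIS {X : Type*} (V : Set (X → Bool)) : Set X :=
  {x | ∃ h₁ ∈ V, ∃ h₂ ∈ V, h₁ x ≠ h₂ x}

/-- The ball of radius `r` around `h` within the class `C`, under marginal `μ`. -/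
def dball {X : Type*} [MeasurableSpace X] (C : Set (X → Bool)) (μ : Measure X)
    (h : X → Bool) (r : ℝ≥0∞) : Set (X → Bool) :=
  {h' ∈ C | μ {x | h x ≠ h' x} ≤ r}

/-- The disagreement coefficient of `h` with respect to `C` under `μ` (with `r₀ = 0`). -/
noncomputable def dcoef {X : Type*} [MeasurableSpace X] (C : Set (X → Bool)) (μ : Measure X)
    (h : X → Bool) : ℝ≥0∞ :=
  ⨆ (r : ℝ≥0∞) (_ : 0 < r), μ (DIS (dball C μ h r)) / r

/-- Interval classifier `h_{[a,b]}`: `+1` iff `x ∈ [a,b]`. -/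
noncomputable def hinterval (a b : ℝ) : ℝ → Bool := fun x => decide (x ∈ Set.Icc a b)



lemma hinterval_ne_iff {a b a' b' x : ℝ} :
    hinterval a b x ≠ hinterval a' b' x ↔ ¬(x ∈ Icc a b ↔ x ∈ Icc a' b') := by
  simp only [hinterval, ne_eq, decide_eq_decide, mem_Icc]

lemma hinterval_eq_iff {a b a' b' x : ℝ} :
    hinterval a b x = hinterval a' b' x ↔ (x ∈ Icc a b ↔ x ∈ Icc a' b') := by
  simp only [hinterval, decide_eq_decide, mem_Icc]

lemma ne_subset_union (a b a' b' : ℝ) :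
    {x | hinterval a b x ≠ hinterval a' b' x} ⊆ Icc a b ∪ Icc a' b' := by
  intro x hx
  rw [mem_setOf_eq, hinterval_ne_iff] at hx
  by_contra hc
  simp only [mem_union, not_or] at hc
  exact hx ⟨fun h => absurd h hc.1, fun h => absurd h hc.2⟩

/-- shared right endpoint: disagreement ⊆ [min a a', max a a'] -/
lemma ne_subset_left {a a' b : ℝ} :
    {x | hinterval a b x ≠ hinterval a' b x} ⊆ Icc (min a a') (max a a') := by
  intro x hx
  rw [mem_setOf_eq, hinterval_ne_iff] at hx
  simp only [mem_Icc] at *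
  by_cases hp : a ≤ x ∧ x ≤ b
  · have hq : ¬(a' ≤ x ∧ x ≤ b) := fun hq => hx ⟨fun _ => hq, fun _ => hp⟩
    have h3 : x < a' := by
      by_contra hc; push_neg at hc; exact hq ⟨hc, hp.2⟩
    exact ⟨le_trans (min_le_left _ _) hp.1, le_trans h3.le (le_max_right _ _)⟩
  · have hq : a' ≤ x ∧ x ≤ b := by
      by_contra hc; exact hx ⟨fun h => absurd h hp, fun h => absurd h hc⟩
    have h3 : x < a := by
      by_contra hc; push_neg at hc; exact hp ⟨hc, hq.2⟩
    exact ⟨le_trans (min_le_right _ _) hq.1, le_trans h3.le (le_max_left _ _)⟩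

/-- shared left endpoint: disagreement ⊆ [min b b', max b b'] -/
lemma ne_subset_right {a b b' : ℝ} :
    {x | hinterval a b x ≠ hinterval a b' x} ⊆ Icc (min b b') (max b b') := by
  intro x hx
  rw [mem_setOf_eq, hinterval_ne_iff] at hx
  simp only [mem_Icc] at *
  by_cases hp : a ≤ x ∧ x ≤ b
  · have hq : ¬(a ≤ x ∧ x ≤ b') := fun hq => hx ⟨fun _ => hq, fun _ => hp⟩
    have h3 : b' < x := by
      by_contra hc; push_neg at hc; exact hq ⟨hp.1, hc⟩
    exact ⟨le_trans (min_le_right _ _) h3.le, le_trans hp.2 (le_max_left _ _)⟩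
  · have hq : a ≤ x ∧ x ≤ b' := by
      by_contra hc; exact hx ⟨fun h => absurd h hp, fun h => absurd h hc⟩
    have h3 : b < x := by
      by_contra hc; push_neg at hc; exact hp ⟨hq.1, hc⟩
    exact ⟨le_trans (min_le_left _ _) h3.le, le_trans hq.2 (le_max_right _ _)⟩

lemma Ico_subset_ne {a b a' b' : ℝ} (h1 : a ≤ b') (h2 : a' ≤ b) :
    Ico (min a a') (max a a') ⊆ {x | hinterval a b x ≠ hinterval a' b' x} := by
  intro x ⟨hl, hr⟩
  rw [mem_setOf_eq, hinterval_ne_iff]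
  simp only [mem_Icc]
  rcases le_total a a' with h | h
  · rw [min_eq_left h] at hl; rw [max_eq_right h] at hr
    intro hiff
    exact absurd (hiff.mp ⟨hl, le_trans hr.le h2⟩).1 (not_le.mpr hr)
  · rw [min_eq_right h] at hl; rw [max_eq_left h] at hr
    intro hiff
    exact absurd (hiff.mpr ⟨hl, le_trans hr.le h1⟩).1 (not_le.mpr hr)

lemma Ioc_subset_ne {a b a' b' : ℝ} (h1 : a ≤ b') (h2 : a' ≤ b) :
    Ioc (min b b') (max b b') ⊆ {x | hinterval a b x ≠ hinterval a' b' x} := by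
  intro x ⟨hl, hr⟩
  rw [mem_setOf_eq, hinterval_ne_iff]
  simp only [mem_Icc]
  rcases le_total b b' with h | h
  · rw [min_eq_left h] at hl; rw [max_eq_right h] at hr
    intro hiff
    exact absurd (hiff.mpr ⟨le_trans h2 hl.le, hr⟩).2 (not_le.mpr hl)
  · rw [min_eq_right h] at hl; rw [max_eq_left h] at hr
    intro hiff
    exact absurd (hiff.mp ⟨le_trans h1 hl.le, hr⟩).2 (not_le.mpr hl)

/-- disjoint case: the whole of [a,b] disagrees -/
lemma Icc_subset_ne_of_disjoint {a b a' b' : ℝ} (h : b' < a ∨ b < a') :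
    Icc a b ⊆ {x | hinterval a b x ≠ hinterval a' b' x} := by
  intro x hx
  rw [mem_setOf_eq, hinterval_ne_iff]
  simp only [mem_Icc] at *
  intro hiff
  have := hiff.mp hx
  rcases h with h | h
  · linarith [hx.1, this.2]
  · linarith [hx.2, this.1]

lemma mu_Icc {u v : ℝ} (hu : 0 ≤ u) (hv : v ≤ 1) :
    (volume.restrict (Icc (0:ℝ) 1)) (Icc u v) = ENNReal.ofReal (v - u) := by
  have hsub : Icc u v ⊆ Icc (0:ℝ) 1 := fun x hx => ⟨le_trans hu hx.1, le_trans hx.2 hv⟩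
  rw [Measure.restrict_apply measurableSet_Icc, inter_eq_left.mpr hsub, Real.volume_Icc]

lemma mu_Ico {u v : ℝ} (hu : 0 ≤ u) (hv : v ≤ 1) :
    (volume.restrict (Icc (0:ℝ) 1)) (Ico u v) = ENNReal.ofReal (v - u) := by
  have hsub : Ico u v ⊆ Icc (0:ℝ) 1 := fun x hx => ⟨le_trans hu hx.1, le_trans hx.2.le hv⟩
  rw [Measure.restrict_apply measurableSet_Ico, inter_eq_left.mpr hsub, Real.volume_Ico]

lemma mu_Ioc {u v : ℝ} (hu : 0 ≤ u) (hv : v ≤ 1) :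
    (volume.restrict (Icc (0:ℝ) 1)) (Ioc u v) = ENNReal.ofReal (v - u) := by
  have hsub : Ioc u v ⊆ Icc (0:ℝ) 1 := fun x hx => ⟨le_trans hu hx.1.le, le_trans hx.2 hv⟩
  rw [Measure.restrict_apply measurableSet_Ioc, inter_eq_left.mpr hsub, Real.volume_Ioc]

lemma mu_le_of_subset {s : Set ℝ} {u v : ℝ} (hs : s ⊆ Icc u v) :
    (volume.restrict (Icc (0:ℝ) 1)) s ≤ ENNReal.ofReal (v - u) := by
  calc (volume.restrict (Icc (0:ℝ) 1)) s ≤ volume s := Measure.restrict_apply_le _ _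
    _ ≤ volume (Icc u v) := measure_mono hs
    _ = ENNReal.ofReal (v - u) := Real.volume_Icc

lemma mu_Ioo {u v : ℝ} (hu : 0 ≤ u) (hv : v ≤ 1) :
    (volume.restrict (Icc (0:ℝ) 1)) (Ioo u v) = ENNReal.ofReal (v - u) := by
  have hsub : Ioo u v ⊆ Icc (0:ℝ) 1 := fun x hx => ⟨le_trans hu hx.1.le, le_trans hx.2.le hv⟩
  rw [Measure.restrict_apply measurableSet_Ioo, inter_eq_left.mpr hsub, Real.volume_Ioo]

lemma mu_univ : (volume.restrict (Icc (0:ℝ) 1)) univ = 1 := by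
  rw [Measure.restrict_apply_univ, Real.volume_Icc]
  norm_num

lemma two_ofReal_add {t : ℝ} (ht : 0 ≤ t) :
    ENNReal.ofReal (2*t) + ENNReal.ofReal (2*t) = 4 * ENNReal.ofReal t := by
  rw [← ENNReal.ofReal_add (by linarith) (by linarith),
    show (2*t+2*t : ℝ) = 4*t by ring, ENNReal.ofReal_mul (by norm_num)]
  norm_num

/-- For intervals on `[0,1]` with the uniform distribution, the disagreement
coefficient of `h_{[a,b]}` equals `max{1/(b−a), 4}`. -/
theorem interval_disagreement_coefficient (a b : ℝ) (ha : 0 < a) (hab : a < b) (hb : b < 1) :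
    dcoef {f | ∃ a' b' : ℝ, 0 < a' ∧ a' < b' ∧ b' < 1 ∧ f = hinterval a' b'}
      (volume.restrict (Set.Icc (0:ℝ) 1)) (hinterval a b)
      = max (1 / ENNReal.ofReal (b - a)) 4 := by
  set C : Set (ℝ → Bool) := {f | ∃ a' b' : ℝ, 0 < a' ∧ a' < b' ∧ b' < 1 ∧ f = hinterval a' b'}
    with hCdef
  set μ : Measure ℝ := volume.restrict (Set.Icc (0:ℝ) 1) with hμdef
  have hba : 0 < b - a := sub_pos.mpr hab
  have hC : hinterval a b ∈ C := ⟨a, b, ha, hab, hb, rfl⟩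
  have hself : ∀ r : ℝ≥0∞, hinterval a b ∈ dball C μ (hinterval a b) r := by
    intro r
    refine ⟨hC, ?_⟩
    have : {x : ℝ | hinterval a b x ≠ hinterval a b x} = ∅ := by
      ext x; simp
    rw [this]
    simp
  -- Key A : upper bound for small radii
  have keyA : ∀ r : ℝ≥0∞, r < ENNReal.ofReal (b - a) →
      μ (DIS (dball C μ (hinterval a b) r)) ≤ 4 * r := by
    intro r hrb
    have hrtop : r ≠ ⊤ := hrb.ne_top
    set t := r.toReal with htdef
    have hofr : ENNReal.ofReal t = r := ENNReal.ofReal_toReal hrtop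
    have ht0 : 0 ≤ t := ENNReal.toReal_nonneg
    have htb : t < b - a := by
      rw [← hofr] at hrb
      exact (ENNReal.ofReal_lt_ofReal_iff hba).mp hrb
    have hsub : DIS (dball C μ (hinterval a b) r) ⊆
        Icc (a-t) (a+t) ∪ Icc (b-t) (b+t) := by
      rintro x ⟨h₁, hb₁, h₂, hb₂, hne⟩
      have key : ∀ h' ∈ dball C μ (hinterval a b) r, hinterval a b x ≠ h' x →
          x ∈ Icc (a-t) (a+t) ∪ Icc (b-t) (b+t) := by
        rintro h' ⟨⟨a', b', ha', hab', hb', rfl⟩, hdist⟩ hnex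
        have hov : a ≤ b' ∧ a' ≤ b := by
          by_contra hc
          push_neg at hc
          have hdisj : b' < a ∨ b < a' := by
            rcases le_or_gt a b' with hle | hlt
            · exact Or.inr (hc hle)
            · exact Or.inl hlt
          have h1 : ENNReal.ofReal (b - a) ≤ r := by
            calc ENNReal.ofReal (b-a) = μ (Icc a b) := (mu_Icc ha.le hb.le).symm
              _ ≤ μ {y | hinterval a b y ≠ hinterval a' b' y} :=
                  measure_mono (Icc_subset_ne_of_disjoint hdisj)
              _ ≤ r := hdist
          exact absurd h1 (not_le.mpr hrb)
        have haa : |a - a'| ≤ t := by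
          have h1 : μ (Ico (min a a') (max a a')) ≤ r :=
            le_trans (measure_mono (Ico_subset_ne hov.1 hov.2)) hdist
          rw [mu_Ico (le_min ha.le ha'.le) (max_le (by linarith) (by linarith))] at h1
          rw [← hofr] at h1
          have := (ENNReal.ofReal_le_ofReal_iff ht0).mp h1
          rwa [max_sub_min_eq_abs, abs_sub_comm] at this
        have hbb : |b - b'| ≤ t := by
          have h1 : μ (Ioc (min b b') (max b b')) ≤ r :=
            le_trans (measure_mono (Ioc_subset_ne hov.1 hov.2)) hdist
          rw [mu_Ioc (le_min (by linarith) (by linarith)) (max_le hb.le hb'.le)] at h1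
          rw [← hofr] at h1
          have := (ENNReal.ofReal_le_ofReal_iff ht0).mp h1
          rwa [max_sub_min_eq_abs, abs_sub_comm] at this
        rw [abs_le] at haa hbb
        simp only [ne_eq, hinterval_eq_iff, mem_Icc] at hnex
        simp only [mem_union, mem_Icc]
        by_cases hp : a ≤ x ∧ x ≤ b
        · have hq : ¬(a' ≤ x ∧ x ≤ b') := fun hq => hnex ⟨fun _ => hq, fun _ => hp⟩
          rcases not_and_or.mp hq with h3 | h3 <;> push_neg at h3
          · exact Or.inl ⟨by linarith [hp.1], by linarith [haa.2]⟩
          · exact Or.inr ⟨by linarith [hbb.2], by linarith [hp.2]⟩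
        · have hq : a' ≤ x ∧ x ≤ b' := by
            by_contra hc
            exact hnex ⟨fun h => absurd h hp, fun h => absurd h hc⟩
          rcases not_and_or.mp hp with h3 | h3 <;> push_neg at h3
          · exact Or.inl ⟨by linarith [hq.1, haa.1], by linarith⟩
          · exact Or.inr ⟨by linarith, by linarith [hq.2, hbb.1]⟩
      have hor : hinterval a b x ≠ h₁ x ∨ hinterval a b x ≠ h₂ x := by
        by_contra hcc
        push_neg at hcc
        exact hne (hcc.1 ▸ hcc.2 ▸ rfl)
      rcases hor with hx | hx
      · exact key h₁ hb₁ hx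
      · exact key h₂ hb₂ hx
    calc μ (DIS (dball C μ (hinterval a b) r))
        ≤ μ (Icc (a-t) (a+t) ∪ Icc (b-t) (b+t)) := measure_mono hsub
      _ ≤ μ (Icc (a-t) (a+t)) + μ (Icc (b-t) (b+t)) := measure_union_le _ _
      _ ≤ ENNReal.ofReal (2*t) + ENNReal.ofReal (2*t) := by
          gcongr
          · exact le_trans (mu_le_of_subset subset_rfl)
              (le_of_eq (by ring_nf))
          · exact le_trans (mu_le_of_subset subset_rfl)
              (le_of_eq (by ring_nf))
      _ = 4 * ENNReal.ofReal t := two_ofReal_add ht0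
      _ = 4 * r := by rw [hofr]
  -- Key B : DIS is everything for large radii
  have keyB : ∀ s : ℝ, b - a < s →
      (1:ℝ≥0∞) ≤ μ (DIS (dball C μ (hinterval a b) (ENNReal.ofReal s))) := by
    intro s hs
    have hsub : Ioo (0:ℝ) 1 ⊆ DIS (dball C μ (hinterval a b) (ENNReal.ofReal s)) := by
      rintro x ⟨hx0, hx1⟩
      by_cases hx : a ≤ x ∧ x ≤ b
      · by_cases hax : a < x
        · refine ⟨hinterval a b, hself _, hinterval a ((a+x)/2),
            ⟨⟨a, (a+x)/2, ha, by linarith, by linarith, rfl⟩, ?_⟩, ?_⟩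
          · have hsub2 : {y | hinterval a b y ≠ hinterval a ((a+x)/2) y} ⊆
                Icc ((a+x)/2) b := by
              have := ne_subset_right (a := a) (b := b) (b' := (a+x)/2)
              rwa [min_eq_right (by linarith [hx.2]), max_eq_left (by linarith [hx.2])] at this
            exact le_trans (mu_le_of_subset hsub2)
              ((ENNReal.ofReal_le_ofReal_iff (by linarith)).mpr (by linarith))
          · simp only [ne_eq, hinterval_eq_iff, mem_Icc]
            intro hiff
            have := (hiff.mp hx).2
            linarith
        · have hxa : x = a := le_antisymm (not_lt.mp hax) hx.1
          refine ⟨hinterval a b, hself _, hinterval ((a+b)/2) b,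
            ⟨⟨(a+b)/2, b, by linarith, by linarith, hb, rfl⟩, ?_⟩, ?_⟩
          · have hsub2 : {y | hinterval a b y ≠ hinterval ((a+b)/2) b y} ⊆
                Icc a ((a+b)/2) := by
              have := ne_subset_left (a := a) (a' := (a+b)/2) (b := b)
              rwa [min_eq_left (by linarith), max_eq_right (by linarith)] at this
            exact le_trans (mu_le_of_subset hsub2)
              ((ENNReal.ofReal_le_ofReal_iff (by linarith)).mpr (by linarith))
          · simp only [ne_eq, hinterval_eq_iff, mem_Icc]
            intro hiff
            have := (hiff.mp hx).1
            rw [hxa] at this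
            linarith
      · set e := min (s - (b-a)) (min x (1-x)) / 4 with hedef
        have hm0 : 0 < min (s - (b-a)) (min x (1-x)) :=
          lt_min (by linarith) (lt_min hx0 (by linarith))
        have he0 : 0 < e := by positivity
        have hme1 := min_le_left (s - (b-a)) (min x (1-x))
        have hme2 : min (s - (b-a)) (min x (1-x)) ≤ x :=
          le_trans (min_le_right _ _) (min_le_left _ _)
        have hme3 : min (s - (b-a)) (min x (1-x)) ≤ 1 - x :=
          le_trans (min_le_right _ _) (min_le_right _ _)
        have hex : e < x := by rw [hedef]; nlinarith
        have hex2 : e < 1 - x := by rw [hedef]; nlinarith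
        refine ⟨hinterval a b, hself _, hinterval (x-e) (x+e),
          ⟨⟨x-e, x+e, by linarith, by linarith, by linarith, rfl⟩, ?_⟩, ?_⟩
        · calc μ {y | hinterval a b y ≠ hinterval (x-e) (x+e) y}
              ≤ μ (Icc a b ∪ Icc (x-e) (x+e)) := measure_mono (ne_subset_union a b _ _)
            _ ≤ μ (Icc a b) + μ (Icc (x-e) (x+e)) := measure_union_le _ _
            _ ≤ ENNReal.ofReal (b-a) + ENNReal.ofReal ((x+e)-(x-e)) := by
                gcongr
                · exact mu_le_of_subset subset_rfl
                · exact mu_le_of_subset subset_rfl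
            _ = ENNReal.ofReal ((b-a) + 2*e) := by
                rw [← ENNReal.ofReal_add (by linarith) (by linarith)]
                ring_nf
            _ ≤ ENNReal.ofReal s := by
                apply ENNReal.ofReal_le_ofReal
                rw [hedef]; linarith
        · simp only [ne_eq, hinterval_eq_iff, mem_Icc]
          intro hiff
          exact hx (hiff.mpr ⟨by linarith, by linarith⟩)
    calc (1:ℝ≥0∞) = μ (Ioo 0 1) := by rw [mu_Ioo le_rfl le_rfl]; norm_num
      _ ≤ _ := measure_mono hsub
  -- Key C : lower bound 4 at a small radius
  set t : ℝ := min a (min (1-b) ((b-a)/2)) with htdef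
  have ht0 : 0 < t := lt_min ha (lt_min (by linarith) (by linarith))
  have hta : t ≤ a := min_le_left _ _
  have htb1 : t ≤ 1 - b := le_trans (min_le_right _ _) (min_le_left _ _)
  have htb2 : t ≤ (b-a)/2 := le_trans (min_le_right _ _) (min_le_right _ _)
  have hsubC : Ioo (a-t) (a+t) ∪ Ioo (b-t) (b+t) ⊆
      DIS (dball C μ (hinterval a b) (ENNReal.ofReal t)) := by
    rintro x (⟨hx1, hx2⟩ | ⟨hx1, hx2⟩)
    · by_cases hax : x < a
      · refine ⟨hinterval a b, hself _, hinterval x b,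
          ⟨⟨x, b, by linarith, by linarith, hb, rfl⟩, ?_⟩, ?_⟩
        · have hsub2 : {y | hinterval a b y ≠ hinterval x b y} ⊆ Icc x a := by
            have := ne_subset_left (a := a) (a' := x) (b := b)
            rwa [min_eq_right hax.le, max_eq_left hax.le] at this
          exact le_trans (mu_le_of_subset hsub2)
            (ENNReal.ofReal_le_ofReal (by linarith))
        · simp only [ne_eq, hinterval_eq_iff, mem_Icc]
          intro hiff
          have := (hiff.mpr ⟨le_refl x, by linarith⟩).1
          linarith
      · push_neg at hax
        set m : ℝ := (x + (a + t))/2 with hmdef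
        have hm1 : x < m := by rw [hmdef]; linarith
        have hm2 : m < a + t := by rw [hmdef]; linarith
        refine ⟨hinterval a b, hself _, hinterval m b,
          ⟨⟨m, b, by linarith, by linarith, hb, rfl⟩, ?_⟩, ?_⟩
        · have hsub2 : {y | hinterval a b y ≠ hinterval m b y} ⊆ Icc a m := by
            have := ne_subset_left (a := a) (a' := m) (b := b)
            rwa [min_eq_left (by linarith), max_eq_right (by linarith)] at this
          exact le_trans (mu_le_of_subset hsub2)
            (ENNReal.ofReal_le_ofReal (by linarith))
        · simp only [ne_eq, hinterval_eq_iff, mem_Icc]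
          intro hiff
          have := (hiff.mp ⟨hax, by linarith⟩).1
          linarith
    · by_cases hbx : b < x
      · refine ⟨hinterval a b, hself _, hinterval a x,
          ⟨⟨a, x, ha, by linarith, by linarith, rfl⟩, ?_⟩, ?_⟩
        · have hsub2 : {y | hinterval a b y ≠ hinterval a x y} ⊆ Icc b x := by
            have := ne_subset_right (a := a) (b := b) (b' := x)
            rwa [min_eq_left hbx.le, max_eq_right hbx.le] at this
          exact le_trans (mu_le_of_subset hsub2)
            (ENNReal.ofReal_le_ofReal (by linarith))
        · simp only [ne_eq, hinterval_eq_iff, mem_Icc]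
          intro hiff
          have := (hiff.mpr ⟨by linarith, le_refl x⟩).2
          linarith
      · push_neg at hbx
        set m : ℝ := (x + (b - t))/2 with hmdef
        have hm1 : m < x := by rw [hmdef]; linarith
        have hm2 : b - t < m := by rw [hmdef]; linarith
        refine ⟨hinterval a b, hself _, hinterval a m,
          ⟨⟨a, m, ha, by linarith, by linarith, rfl⟩, ?_⟩, ?_⟩
        · have hsub2 : {y | hinterval a b y ≠ hinterval a m y} ⊆ Icc m b := by
            have := ne_subset_right (a := a) (b := b) (b' := m)
            rwa [min_eq_right (by linarith), max_eq_left (by linarith)] at this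
          exact le_trans (mu_le_of_subset hsub2)
            (ENNReal.ofReal_le_ofReal (by linarith))
        · simp only [ne_eq, hinterval_eq_iff, mem_Icc]
          intro hiff
          have := (hiff.mp ⟨by linarith, hbx⟩).2
          linarith
  have keyC : 4 * ENNReal.ofReal t ≤ μ (DIS (dball C μ (hinterval a b) (ENNReal.ofReal t))) := by
    have hd : Disjoint (Ioo (a-t) (a+t)) (Ioo (b-t) (b+t)) := by
      rw [Set.Ioo_disjoint_Ioo, min_eq_left (by linarith), max_eq_right (by linarith)]
      linarith
    have hmeas : μ (Ioo (a-t) (a+t) ∪ Ioo (b-t) (b+t)) = 4 * ENNReal.ofReal t := by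
      rw [measure_union hd measurableSet_Ioo,
        mu_Ioo (by linarith) (by linarith), mu_Ioo (by linarith) (by linarith),
        show a + t - (a - t) = 2*t by ring, show b + t - (b - t) = 2*t by ring]
      exact two_ofReal_add ht0.le
    rw [← hmeas]
    exact measure_mono hsubC
  -- Assembly
  apply le_antisymm
  · rw [dcoef]
    apply iSup₂_le
    intro r hr
    rcases lt_or_ge r (ENNReal.ofReal (b-a)) with hcase | hcase
    · refine le_trans ?_ (le_max_right _ _)
      have hrtop : r ≠ ⊤ := hcase.ne_top
      calc μ (DIS (dball C μ (hinterval a b) r)) / r ≤ (4*r)/r :=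
            ENNReal.div_le_div_right (keyA r hcase) r
        _ = 4 * (r/r) := by rw [mul_div_assoc]
        _ = 4 := by rw [ENNReal.div_self hr.ne' hrtop, mul_one]
    · refine le_trans ?_ (le_max_left _ _)
      rw [one_div]
      calc μ (DIS (dball C μ (hinterval a b) r)) / r ≤ 1 / r := by
            apply ENNReal.div_le_div_right
            rw [← mu_univ]
            exact measure_mono (subset_univ _)
        _ = r⁻¹ := one_div r
        _ ≤ (ENNReal.ofReal (b-a))⁻¹ := ENNReal.inv_le_inv.mpr hcase
  · apply max_le
    · rw [one_div]
      apply le_of_forall_lt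
      intro c hc
      have h1 : ENNReal.ofReal (b-a) < c⁻¹ := ENNReal.lt_inv_iff_lt_inv.mp hc
      obtain ⟨d, hd1, hd2⟩ := exists_between h1
      have hdt : d ≠ ⊤ := hd2.ne_top
      have hds : ENNReal.ofReal d.toReal = d := ENNReal.ofReal_toReal hdt
      have hs : b - a < d.toReal :=
        (ENNReal.ofReal_lt_iff_lt_toReal hba.le hdt).mp hd1
      have hterm : d⁻¹ ≤ dcoef C μ (hinterval a b) := by
        have hkb := keyB d.toReal hs
        rw [hds] at hkb
        have h3 : d⁻¹ ≤ μ (DIS (dball C μ (hinterval a b) d)) / d := by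
          rw [← one_div]
          exact ENNReal.div_le_div_right hkb d
        refine le_trans h3 ?_
        rw [dcoef]
        exact le_iSup₂_of_le d (lt_of_le_of_lt zero_le hd1) le_rfl
      exact lt_of_lt_of_le (ENNReal.lt_inv_iff_lt_inv.mp hd2) hterm
    · rw [dcoef]
      refine le_iSup₂_of_le (ENNReal.ofReal t) (ENNReal.ofReal_pos.mpr ht0) ?_
      have htne : ENNReal.ofReal t ≠ 0 := (ENNReal.ofReal_pos.mpr ht0).ne'
      calc (4:ℝ≥0∞) = 4 * ENNReal.ofReal t / ENNReal.ofReal t := by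
            rw [mul_div_assoc, ENNReal.div_self htne ENNReal.ofReal_ne_top, mul_one]
        _ ≤ _ := ENNReal.div_le_div_right keyC _
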